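/- arXiv:1307.5271 — 4 statements merged into one kernel-verified Lean document; each statement's English description precedes it below -/
import Mathlib

section
/- Let (T, 𝓣, λ) be a probability space, 𝓕 a sub-σ-algebra, and A a compact metric space. Let g : T → 𝓜(A) be 𝓕-measurable and f : T → A be 𝓣-measurable. Suppose that for every E ∈ 𝓕 and every Borel set B ⊆ A, λ(E ∩ f⁻¹(B)) = ∫_E g(t)(B) dλ(t). Then f(t) ∈ supp g(t) for λ-almost every t ∈ T. -/
open MeasureTheory

/-- The topological support of a Borel measure. -/
def msupport {A : Type*} [TopologicalSpace A] [MeasurableSpace A] (μ : Measure A) : Set A :=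
  {x | ∀ U : Set A, IsOpen U → x ∈ U → 0 < μ U}

theorem stmt2 {T A : Type*} [mT : MeasurableSpace T]
    [MetricSpace A] [CompactSpace A] [mA : MeasurableSpace A] [BorelSpace A]
    (lam : Measure T) [IsProbabilityMeasure lam]
    (F : MeasurableSpace T) (hF : F ≤ mT)
    (g : T → Measure A) (hg : ∀ t, IsProbabilityMeasure (g t))
    (hgm : ∀ B : Set A, MeasurableSet B → Measurable[F] fun t => g t B)
    (f : T → A) (hf : Measurable[mT, mA] f)
    (heq : ∀ E : Set T, MeasurableSet[F] E → ∀ B : Set A, MeasurableSet B →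
      lam (E ∩ f ⁻¹' B) = ∫⁻ t in E, g t B ∂lam) :
    ∀ᵐ t ∂lam, f t ∈ msupport (g t) := by
  obtain ⟨b, hbc, -, hb⟩ := TopologicalSpace.exists_countable_basis A
  have key : ∀ U ∈ b, lam ({t | g t U = 0} ∩ f ⁻¹' U) = 0 := by
    intro U hU
    have hUo : IsOpen U := hb.isOpen hU
    have hUm : MeasurableSet U := hUo.measurableSet
    have hEF : MeasurableSet[F] {t | g t U = 0} :=
      hgm U hUm (measurableSet_singleton 0)
    rw [heq _ hEF U hUm]
    rw [setLIntegral_congr_fun (hF _ hEF)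
      (fun t (ht : g t U = 0) => ht)]
    simp
  have hsub : {t | f t ∉ msupport (g t)} ⊆ ⋃ U ∈ b, ({t | g t U = 0} ∩ f ⁻¹' U) := by
    intro t ht
    simp only [msupport, Set.mem_setOf_eq, not_forall] at ht
    obtain ⟨U, hUo, htU, hpos⟩ := ht
    have hU0 : g t U = 0 := by
      simpa [pos_iff_ne_zero, not_not] using hpos
    obtain ⟨V, hVb, htV, hVU⟩ := hb.exists_subset_of_mem_open htU hUo
    refine Set.mem_biUnion hVb ⟨?_, htV⟩
    exact le_antisymm (hU0 ▸ measure_mono hVU) zero_le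
  rw [ae_iff]
  refine measure_mono_null hsub ?_
  exact (measure_biUnion_null_iff hbc).2 key
end

section
/- Let (T, 𝓣, λ) be a probability space, 𝓕 a sub-σ-algebra of 𝓣, and A a compact metric space. Let g : T → 𝓜(A) be 𝓕-measurable. Then the map c : T × A → ℝ defined by c(t,a) = 1 if a ∈ supp g(t) and 0 otherwise is 𝓕 ⊗ 𝓑(A)-measurable. -/
open MeasureTheory

theorem stmt3 {T A : Type*} [mT : MeasurableSpace T]
    [MetricSpace A] [CompactSpace A] [mA : MeasurableSpace A] [BorelSpace A]
    (lam : Measure T) [IsProbabilityMeasure lam]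
    (F : MeasurableSpace T) (hF : F ≤ mT)
    (g : T → Measure A) (hg : ∀ t, IsProbabilityMeasure (g t))
    (hgm : ∀ B : Set A, MeasurableSet B → Measurable[F] fun t => g t B) :
    Measurable[F.prod mA] ({p : T × A | p.2 ∈ msupport (g p.1)}.indicator fun _ => (1 : ℝ)) := by
  have hset : MeasurableSet[F.prod mA] {p : T × A | p.2 ∈ msupport (g p.1)} := by
    have hcompl : {p : T × A | p.2 ∈ msupport (g p.1)}ᶜ =
        ⋃ U ∈ TopologicalSpace.countableBasis A, {t | g t U = 0} ×ˢ U := by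
      ext ⟨t, a⟩
      simp only [Set.mem_compl_iff, Set.mem_setOf_eq, msupport, not_forall, Set.mem_iUnion,
        Set.mem_prod, exists_prop]
      constructor
      · rintro ⟨U, hU, haU, hμ⟩
        obtain ⟨V, hV, haV, hVU⟩ :=
          (TopologicalSpace.isBasis_countableBasis A).exists_subset_of_mem_open haU hU
        refine ⟨V, hV, ?_, haV⟩
        have h0 : g t U = 0 := by
          simpa using (not_lt.mp hμ)
        exact le_antisymm (h0 ▸ measure_mono hVU) zero_le
      · rintro ⟨U, hU, hgU, haU⟩
        exact ⟨U, (TopologicalSpace.isBasis_countableBasis A).isOpen hU, haU, by simp [hgU]⟩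
    rw [← compl_compl {p : T × A | p.2 ∈ msupport (g p.1)}, hcompl]
    refine MeasurableSet.compl ?_
    refine MeasurableSet.biUnion (TopologicalSpace.countable_countableBasis A) ?_
    intro U hU
    have hUopen : IsOpen U := (TopologicalSpace.isBasis_countableBasis A).isOpen hU
    have h1 : MeasurableSet[F] {t | g t U = 0} :=
      (hgm U hUopen.measurableSet) (measurableSet_singleton 0)
    exact @MeasurableSet.prod T A F mA _ _ h1 hUopen.measurableSet
  exact measurable_const.indicator hset
end

section
/- Let A₁, …, Aₙ be compact metric spaces, (Tᵢ, 𝓕ᵢ, λᵢ) probability spaces, and uᵢ : (∏ⱼ Aⱼ) × Tᵢ → ℝ be 𝓑(∏ Aⱼ) ⊗ 𝓕ᵢ-measurable, continuous in the action profile for each fixed tᵢ, and dominated by an integrable function hᵢ on Tᵢ. Define Fᵢ(tᵢ, aᵢ, τ₁, …, τₙ) = ∫_{A_{-i}} uᵢ(aᵢ, a_{-i}, tᵢ) d(⊗_{j≠i} τⱼ)(a_{-i}) for probability measures τⱼ ∈ 𝓜(Aⱼ). Then for each fixed tᵢ, Fᵢ(tᵢ, ·, ·) is jointly continuous on Aᵢ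 × ∏ⱼ 𝓜(Aⱼ), where each 𝓜(Aⱼ) carries the topology of weak convergence. -/
open MeasureTheory

private lemma contIntegrable {X : Type*} [MeasurableSpace X] [TopologicalSpace X]
    [OpensMeasurableSpace X] [CompactSpace X] (μ : Measure X) [IsFiniteMeasure μ]
    {g : X → ℝ} (hg : Continuous g) : Integrable g μ :=
  (BoundedContinuousFunction.mkOfCompact ⟨g, hg⟩).integrable μ

private lemma aux8 {Y X : Type*} [TopologicalSpace Y] [TopologicalSpace X] [CompactSpace X]
    [MeasurableSpace X] [OpensMeasurableSpace X]
    (g : Y × X → ℝ) (hg : Continuous g) :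
    Continuous fun p : Y × ProbabilityMeasure X => ∫ x, g (p.1, x) ∂(p.2 : Measure X) := by
  rw [continuous_iff_continuousAt]
  intro p₀
  set G : Y → C(X, ℝ) := fun y => (ContinuousMap.curry ⟨g, hg⟩) y with hGdef
  have hG : Continuous G := (ContinuousMap.curry ⟨g, hg⟩).continuous
  rw [ContinuousAt, Metric.tendsto_nhds]
  intro ε hε
  have h1 : ∀ᶠ p : Y × ProbabilityMeasure X in nhds p₀, dist (G p.1) (G p₀.1) < ε / 2 :=
    Metric.tendsto_nhds.mp ((hG.comp continuous_fst).tendsto p₀) (ε / 2) (by positivity)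
  have h2' : Filter.Tendsto (fun p : Y × ProbabilityMeasure X =>
      ∫ x, g (p₀.1, x) ∂(p.2 : Measure X)) (nhds p₀)
      (nhds (∫ x, g (p₀.1, x) ∂(p₀.2 : Measure X))) := by
    have hc := (ProbabilityMeasure.continuous_integral_boundedContinuousFunction
      (BoundedContinuousFunction.mkOfCompact (G p₀.1))).tendsto p₀.2
    exact hc.comp (continuous_snd.tendsto p₀)
  have h2 := Metric.tendsto_nhds.mp h2' (ε / 2) (by positivity)
  filter_upwards [h1, h2] with p hp1 hp2
  have int1 : Integrable (fun x => g (p.1, x)) (p.2 : Measure X) :=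
    contIntegrable _ (hg.comp (continuous_const.prodMk continuous_id))
  have int2 : Integrable (fun x => g (p₀.1, x)) (p.2 : Measure X) :=
    contIntegrable _ (hg.comp (continuous_const.prodMk continuous_id))
  have key1 : dist (∫ x, g (p.1, x) ∂(p.2 : Measure X))
      (∫ x, g (p₀.1, x) ∂(p.2 : Measure X)) ≤ dist (G p.1) (G p₀.1) := by
    rw [Real.dist_eq, ← integral_sub int1 int2, ← Real.norm_eq_abs]
    calc ‖∫ x, (g (p.1, x) - g (p₀.1, x)) ∂(p.2 : Measure X)‖
        ≤ dist (G p.1) (G p₀.1) * ((p.2 : Measure X) Set.univ).toReal := by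
          apply norm_integral_le_of_norm_le_const
          filter_upwards with x
          calc ‖g (p.1, x) - g (p₀.1, x)‖ = dist (G p.1 x) (G p₀.1 x) := by
                simp [Real.dist_eq, hGdef, Real.norm_eq_abs]
            _ ≤ dist (G p.1) (G p₀.1) := ContinuousMap.dist_apply_le_dist x
      _ = dist (G p.1) (G p₀.1) := by simp
  calc dist (∫ x, g (p.1, x) ∂(p.2 : Measure X)) (∫ x, g (p₀.1, x) ∂(p₀.2 : Measure X))
      ≤ dist (∫ x, g (p.1, x) ∂(p.2 : Measure X)) (∫ x, g (p₀.1, x) ∂(p.2 : Measure X))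
        + dist (∫ x, g (p₀.1, x) ∂(p.2 : Measure X))
          (∫ x, g (p₀.1, x) ∂(p₀.2 : Measure X)) := dist_triangle _ _ _
    _ < ε / 2 + ε / 2 := by exact add_lt_add (key1.trans_lt hp1) hp2
    _ = ε := by ring

private lemma key8 : ∀ (m : ℕ) (X : Fin m → Type u) [∀ k, MetricSpace (X k)]
    [∀ k, CompactSpace (X k)] [∀ k, MeasurableSpace (X k)] [∀ k, BorelSpace (X k)]
    {Y : Type u} [TopologicalSpace Y] (f : Y × (∀ k, X k) → ℝ), Continuous f →
    Continuous fun p : Y × (∀ k, ProbabilityMeasure (X k)) =>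
      ∫ b, f (p.1, b) ∂(Measure.pi fun k => (p.2 k : Measure (X k))) := by
  intro m
  induction m with
  | zero =>
    intro X _ _ _ _ Y _ f hf
    have : (fun p : Y × (∀ k, ProbabilityMeasure (X k)) =>
        ∫ b, f (p.1, b) ∂(Measure.pi fun k => (p.2 k : Measure (X k))))
        = fun p => f (p.1, default) := by
      funext p
      rw [MeasureTheory.integral_unique]
      simp
    rw [this]
    exact hf.comp (continuous_fst.prodMk continuous_const)
  | succ m ih =>
    intro X _ _ _ _ Y _ f hf
    -- inner integral, continuous by IH
    have hinner := ih (fun j => X ((0 : Fin (m + 1)).succAbove j)) (Y := Y × X 0)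
      (f := fun q : (Y × X 0) × (∀ j, X ((0 : Fin (m + 1)).succAbove j)) =>
        f (q.1.1, (0 : Fin (m + 1)).insertNth q.1.2 q.2))
      (hf.comp ((continuous_fst.comp continuous_fst).prodMk
        ((continuous_snd.comp continuous_fst).finInsertNth 0 continuous_snd)))
    -- outer, via aux8
    have houter := aux8 (Y := Y × (∀ j, ProbabilityMeasure (X ((0 : Fin (m + 1)).succAbove j))))
      (X := X 0)
      (g := fun w : (Y × (∀ j, ProbabilityMeasure (X ((0 : Fin (m + 1)).succAbove j)))) × X 0 =>
        ∫ x', f (w.1.1, (0 : Fin (m + 1)).insertNth w.2 x')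
          ∂(Measure.pi fun j => (w.1.2 j : Measure _)))
      (by exact hinner.comp (((continuous_fst.comp continuous_fst).prodMk
        continuous_snd).prodMk (continuous_snd.comp continuous_fst)))
    have hcomp := houter.comp (f := fun p : Y × (∀ k, ProbabilityMeasure (X k)) =>
      ((p.1, fun j => p.2 ((0 : Fin (m + 1)).succAbove j)), p.2 0))
      ((continuous_fst.prodMk (continuous_pi fun j =>
        (continuous_apply _).comp continuous_snd)).prodMk
        ((continuous_apply (0 : Fin (m + 1))).comp continuous_snd))
    refine hcomp.congr fun p => ?_
    -- show iterated integral equals pi integral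
    have mp := measurePreserving_piFinSuccAbove (fun k => (p.2 k : Measure (X k))) 0
    have emb := (MeasurableEquiv.piFinSuccAbove X 0).measurableEmbedding
    have hgc : Continuous fun z : X 0 × (∀ j, X ((0 : Fin (m + 1)).succAbove j)) =>
        f (p.1, (0 : Fin (m + 1)).insertNth z.1 z.2) :=
      hf.comp (continuous_const.prodMk (continuous_fst.finInsertNth 0 continuous_snd))
    have hint : Integrable (fun z : X 0 × (∀ j, X ((0 : Fin (m + 1)).succAbove j)) =>
        f (p.1, (0 : Fin (m + 1)).insertNth z.1 z.2))
        (((p.2 0 : Measure (X 0))).prod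
          (Measure.pi fun j => (p.2 ((0 : Fin (m + 1)).succAbove j) : Measure _))) :=
      contIntegrable _ hgc
    calc (∫ x0, ∫ x', f (p.1, (0 : Fin (m + 1)).insertNth x0 x')
            ∂(Measure.pi fun j => (p.2 ((0 : Fin (m + 1)).succAbove j) : Measure _))
            ∂(p.2 0 : Measure (X 0)))
        = ∫ z, f (p.1, (0 : Fin (m + 1)).insertNth z.1 z.2)
            ∂(((p.2 0 : Measure (X 0))).prod
              (Measure.pi fun j => (p.2 ((0 : Fin (m + 1)).succAbove j) : Measure _))) :=
          (MeasureTheory.integral_prod _ hint).symm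
      _ = ∫ b, f (p.1, b) ∂(Measure.pi fun k => (p.2 k : Measure (X k))) := by
          rw [← mp.integral_comp emb]
          congr 1
          funext b
          congr 1
          exact congrArg (fun z => (p.1, z)) ((Fin.insertNthEquiv X 0).apply_symm_apply b)

theorem stmt8 {n : ℕ}
    (A : Fin n → Type*) [∀ j, MetricSpace (A j)] [∀ j, CompactSpace (A j)]
    [mA : ∀ j, MeasurableSpace (A j)] [∀ j, BorelSpace (A j)]
    {T : Type*} [MeasurableSpace T]
    (i : Fin n) (t : T)
    (u : (∀ j, A j) × T → ℝ)
    (huc : Continuous fun a : ∀ j, A j => u (a, t)) :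
    Continuous fun p : A i × (∀ j, ProbabilityMeasure (A j)) =>
      ∫ b : ∀ j : {j : Fin n // j ≠ i}, A j.1,
        u ((fun j => if hj : j = i then hj ▸ p.1 else b ⟨j, hj⟩), t)
          ∂(Measure.pi fun j : {j : Fin n // j ≠ i} => (p.2 j.1 : Measure (A j.1))) := by
  classical
  set sub := {j : Fin n // j ≠ i}
  set F : A i × (∀ s : sub, A s.1) → ℝ := fun q =>
    u ((fun j => if hj : j = i then hj ▸ q.1 else q.2 ⟨j, hj⟩), t) with hFdef
  have hprof : Continuous fun q : A i × (∀ s : sub, A s.1) =>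
      (fun j => if hj : j = i then hj ▸ q.1 else q.2 ⟨j, hj⟩ : ∀ j, A j) := by
    apply continuous_pi
    intro j
    by_cases hj : j = i
    · subst hj
      have h1 : (fun q : A j × (∀ s : sub, A s.1) =>
          if h : j = j then h ▸ q.1 else q.2 ⟨j, h⟩) = fun q => q.1 :=
        funext fun q => dif_pos rfl
      rw [h1]
      exact continuous_fst
    · simp only [dif_neg hj]
      exact (continuous_apply (⟨j, hj⟩ : sub)).comp continuous_snd
  have hF : Continuous F := huc.comp hprof
  set e : Fin (Fintype.card sub) ≃ sub := (Fintype.equivFin sub).symm with hedef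
  have hpclcont : Continuous fun c : ∀ k, A (e k).1 =>
      (MeasurableEquiv.piCongrLeft (fun s : sub => A s.1) e) c := by
    have : ⇑(MeasurableEquiv.piCongrLeft (fun s : sub => A s.1) e)
        = ⇑(Homeomorph.piCongrLeft (Y := fun s : sub => A s.1) e) := rfl
    rw [this]
    exact (Homeomorph.piCongrLeft (Y := fun s : sub => A s.1) e).continuous
  have hkey := key8 (Fintype.card sub) (fun k => A (e k).1) (Y := A i)
    (f := fun q : A i × (∀ k, A (e k).1) =>
      F (q.1, (MeasurableEquiv.piCongrLeft (fun s : sub => A s.1) e) q.2))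
    (hF.comp (continuous_fst.prodMk (hpclcont.comp continuous_snd)))
  have hcomp := hkey.comp (f := fun p : A i × (∀ j, ProbabilityMeasure (A j)) =>
    (p.1, fun k => p.2 (e k).1))
    (continuous_fst.prodMk (continuous_pi fun k => (continuous_apply _).comp continuous_snd))
  refine hcomp.congr fun p => ?_
  have mp := measurePreserving_piCongrLeft (fun s : sub => (p.2 s.1 : Measure (A s.1))) e
  have emb := (MeasurableEquiv.piCongrLeft (fun s : sub => A s.1) e).measurableEmbedding
  exact mp.integral_comp emb fun b => F (p.1, b)
end

section
/- Let (Tᵢ, 𝓣ᵢ, λᵢ), i = 1,…,n, be probability spaces, Aᵢ compact metric spaces, and suppose Assumptions hold: uᵢ : A × Tᵢ → ℝ is 𝓑(A) ⊗ 𝓕ᵢ-measurable, continuous in a, dominated by integrable hᵢ, where 𝓕ᵢ ⊆ 𝓣ᵢ is countably generated, λ = ⊗ λᵢ, and each 𝓣ᵢ is atomless and nowhere equivalent to 𝓕ᵢ. If g = (g₁,…,gₙ) is an 𝓕-measurable mixed strategy equilibrium and f = (f₁,…,fₙ) is a pure strategy profile universally distribution equivalent to g, then f is a pure strategy equilibrium: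 for every i and every 𝓣ᵢ-measurable f̃ᵢ : Tᵢ → Aᵢ, Uᵢ(f̃ᵢ, f_{-i}) ≤ Uᵢ(f). -/
open MeasureTheory ProbabilityTheory Function Set

section Aux

variable {ι : Type*} [Fintype ι]

theorem aux_measurable_pi_kernel {T A : ι → Type*} [∀ j, MeasurableSpace (T j)]
    [mA : ∀ j, MeasurableSpace (A j)]
    (ρ : ∀ j, T j → Measure (A j)) (hp : ∀ j t, IsProbabilityMeasure (ρ j t))
    (hm : ∀ j (B : Set (A j)), MeasurableSet B → Measurable fun t => ρ j t B) :
    Measurable fun t : ∀ j, T j => Measure.pi fun j => ρ j (t j) := by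
  haveI : ∀ t : ∀ j, T j, IsProbabilityMeasure (Measure.pi fun j => ρ j (t j)) := by
    intro t; haveI := fun j => hp j (t j); infer_instance
  apply Measure.measurable_of_measurable_coe
  intro s hs
  refine MeasurableSpace.induction_on_inter
    (C := fun s _ => Measurable fun t : ∀ j, T j => (Measure.pi fun j => ρ j (t j)) s)
    generateFrom_pi.symm isPiSystem_pi (by simp) ?_ ?_ ?_ s hs
  · rintro _ ⟨B, hB, rfl⟩
    simp only [mem_univ_pi, mem_setOf_eq] at hB
    have : ∀ t : ∀ j, T j, (Measure.pi fun j => ρ j (t j)) (univ.pi B) = ∏ j, ρ j (t j) (B j) :=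
      fun t => Measure.pi_pi _ _
    simp only [this]
    exact Finset.measurable_prod _ fun j _ => (hm j (B j) (hB j)).comp (measurable_pi_apply j)
  · intro s hs ihs
    have : ∀ t : ∀ j, T j, (Measure.pi fun j => ρ j (t j)) sᶜ
        = 1 - (Measure.pi fun j => ρ j (t j)) s := fun t => prob_compl_eq_one_sub hs
    simp only [this]
    exact Measurable.const_sub ihs 1
  · intro s hdisj hs ihs
    have : ∀ t : ∀ j, T j, (Measure.pi fun j => ρ j (t j)) (⋃ k, s k)
        = ∑' k, (Measure.pi fun j => ρ j (t j)) (s k) := fun t => measure_iUnion hdisj hs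
    simp only [this]
    exact Measurable.ennreal_tsum ihs

theorem aux_map_eval_pi {T : ι → Type*} [mT : ∀ j, MeasurableSpace (T j)]
    (lam : ∀ j, Measure (T j)) [∀ j, IsProbabilityMeasure (lam j)] (i : ι) :
    Measure.map (Function.eval i) (Measure.pi lam) = lam i := by
  classical
  ext s hs
  rw [Measure.map_apply (measurable_pi_apply i) hs, eval_preimage, Measure.pi_pi]
  rw [Finset.prod_eq_single i]
  · simp
  · intro j _ hj; simp [Function.update_of_ne hj]
  · simp

end Aux

section SCL

theorem aux_scl {m : ℕ}
    (A T : Fin (m+1) → Type*)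
    (i j₀ : Fin (m+1))
    (Fi : MeasurableSpace (T i)) (G0 : MeasurableSpace (T j₀))
    [mA : ∀ j, MeasurableSpace (A j)] [mT : ∀ j, MeasurableSpace (T j)]
    (lam : ∀ j, Measure (T j)) [∀ j, IsProbabilityMeasure (lam j)]
    (hFi : Fi ≤ mT i) (hG0 : G0 ≤ mT j₀)
    (v : (∀ j, A j) × T i → ℝ)
    (hvm : Measurable[(MeasurableSpace.pi (m := mA)).prod Fi] v)
    (H : T i → ℝ) (hH : Integrable H (lam i))
    (hdom : ∀ a t, |v (a, t)| ≤ H t)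
    (σ : ∀ j, T j → Measure (A j))
    (hσp : ∀ j t, IsProbabilityMeasure (σ j t))
    (hσm : ∀ j (B : Set (A j)), MeasurableSet B → Measurable fun t => σ j t B)
    (hslot : ∀ t' : ∀ k, T (j₀.succAbove k),
      @Measurable (T j₀) (T i) G0 Fi (fun t₀ => j₀.insertNth t₀ t' i))
    (hHslot : ∀ t' : ∀ k, T (j₀.succAbove k),
      Integrable (fun t₀ : T j₀ => |H (j₀.insertNth t₀ t' i)|) (lam j₀))
    (τ₁ τ₂ : T j₀ → Measure (A j₀))
    (hτ₁p : ∀ t, IsProbabilityMeasure (τ₁ t)) (hτ₂p : ∀ t, IsProbabilityMeasure (τ₂ t))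
    (hτ₁m : ∀ B : Set (A j₀), MeasurableSet B → Measurable fun t => τ₁ t B)
    (hτ₂m : ∀ B : Set (A j₀), MeasurableSet B → Measurable fun t => τ₂ t B)
    (hJ : ∀ E : Set (T j₀), MeasurableSet[G0] E → ∀ B : Set (A j₀), MeasurableSet B →
      ∫⁻ t in E, τ₁ t B ∂(lam j₀) = ∫⁻ t in E, τ₂ t B ∂(lam j₀)) :
    ∫ t, (∫ a, v (a, t i) ∂(Measure.pi fun j => Function.update σ j₀ τ₁ j (t j)))
        ∂(Measure.pi lam)
      = ∫ t, (∫ a, v (a, t i) ∂(Measure.pi fun j => Function.update σ j₀ τ₂ j (t j)))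
        ∂(Measure.pi lam) := by
  classical
  -- nonnegative dominating function
  set H₁ : T i → ℝ := fun t => |H t| with hH₁def
  have hH₁ : Integrable H₁ (lam i) := hH.abs
  have hdom₁ : ∀ a t, |v (a, t)| ≤ H₁ t := fun a t => (hdom a t).trans (le_abs_self _)
  have hprod_le : (MeasurableSpace.pi (m := mA)).prod Fi
      ≤ (MeasurableSpace.pi (m := mA)).prod (mT i) :=
    sup_le_sup le_rfl (MeasurableSpace.comap_mono hFi)
  have hvm' : Measurable v := hvm.mono hprod_le le_rfl
  set eT := MeasurableEquiv.piFinSuccAbove T j₀ with heT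
  set eA := MeasurableEquiv.piFinSuccAbove A j₀ with heA
  have heTsymm : ∀ (t₀ : T j₀) (t' : ∀ k, T (j₀.succAbove k)),
      eT.symm (t₀, t') = j₀.insertNth t₀ t' := fun _ _ => rfl
  set lam' : ∀ k : Fin m, Measure (T (j₀.succAbove k)) := fun k => lam (j₀.succAbove k) with hlam'
  haveI : ∀ k, IsProbabilityMeasure (lam' k) := fun k => by rw [hlam']; infer_instance
  set σ' : ∀ k : Fin m, T (j₀.succAbove k) → Measure (A (j₀.succAbove k)) :=
    fun k => σ (j₀.succAbove k) with hσ'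
  set Wfull : (∀ k, T (j₀.succAbove k)) → (T j₀ × A j₀) → ℝ := fun t' p =>
    ∫ a', v (eA.symm (p.2, a'), j₀.insertNth p.1 t' i)
      ∂(Measure.pi fun k => σ' k (t' k)) with hWfull
  haveI hPit' : ∀ t' : ∀ k, T (j₀.succAbove k),
      IsProbabilityMeasure (Measure.pi fun k => σ' k (t' k)) := by
    intro t'; haveI := fun k => hσp (j₀.succAbove k) (t' k); infer_instance
  -- pointwise bound for Wfull
  have hWb : ∀ (t' : ∀ k, T (j₀.succAbove k)) (p : T j₀ × A j₀),
      ‖Wfull t' p‖ ≤ H₁ (j₀.insertNth p.1 t' i) := by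
    intro t' p
    have h0 := norm_integral_le_of_norm_le_const (μ := Measure.pi fun k => σ' k (t' k))
      (f := fun a' => v (eA.symm (p.2, a'), j₀.insertNth p.1 t' i))
      (C := H₁ (j₀.insertNth p.1 t' i))
      (Filter.Eventually.of_forall fun a' => by
        rw [Real.norm_eq_abs]; exact hdom₁ _ _)
    rw [hWfull]
    simpa [measure_univ] using h0
  -- representation lemma
  have rep : ∀ (τ : T j₀ → Measure (A j₀)) (hτp : ∀ t, IsProbabilityMeasure (τ t))
      (hτm : ∀ B : Set (A j₀), MeasurableSet B → Measurable fun t => τ t B),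
      ∫ t, (∫ a, v (a, t i) ∂(Measure.pi fun j => Function.update σ j₀ τ j (t j)))
          ∂(Measure.pi lam)
        = ∫ t', (∫ p, Wfull t' p
            ∂((lam j₀) ⊗ₘ (⟨τ, Measure.measurable_of_measurable_coe τ hτm⟩ :
                @Kernel (T j₀) (A j₀) (mT j₀) (mA j₀)))) ∂(Measure.pi lam') := by
    intro τ hτp hτm
    set κτ : @Kernel (T j₀) (A j₀) (mT j₀) (mA j₀) :=
      ⟨τ, Measure.measurable_of_measurable_coe τ hτm⟩ with hκτ
    haveI : IsMarkovKernel κτ := ⟨fun t => hτp t⟩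
    set ς := Function.update σ j₀ τ with hς
    have hςp : ∀ j t, IsProbabilityMeasure (ς j t) := by
      intro j t
      rcases eq_or_ne j j₀ with rfl | hj
      · rw [hς, Function.update_self]; exact hτp t
      · rw [hς, Function.update_of_ne hj]; exact hσp j t
    have hςm : ∀ j (B : Set (A j)), MeasurableSet B → Measurable fun t => ς j t B := by
      intro j B hB
      rcases eq_or_ne j j₀ with rfl | hj
      · rw [hς, Function.update_self]; exact hτm B hB
      · rw [hς, Function.update_of_ne hj]; exact hσm j B hB
    set κς : @Kernel (∀ j, T j) (∀ j, A j) (MeasurableSpace.pi (m := mT))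
        (MeasurableSpace.pi (m := mA)) :=
      ⟨fun t => Measure.pi fun j => ς j (t j),
        aux_measurable_pi_kernel _ (fun j t => hςp j t) hςm⟩ with hκς
    haveI hPiς : ∀ t : ∀ j, T j, IsProbabilityMeasure (Measure.pi fun j => ς j (t j)) := by
      intro t; haveI := fun j => hςp j (t j); infer_instance
    haveI : IsMarkovKernel κς := ⟨fun t => hPiς t⟩
    set Inner : (∀ j, T j) → ℝ :=
      fun t => ∫ a, v (a, t i) ∂(Measure.pi fun j => ς j (t j)) with hInner
    have smInner : StronglyMeasurable Inner := by
      have hsm : StronglyMeasurable fun q : (∀ j, T j) × (∀ j, A j) => v (q.2, q.1 i) :=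
        (hvm'.comp (measurable_snd.prodMk
          ((measurable_pi_apply i).comp measurable_fst))).stronglyMeasurable
      exact hsm.integral_kernel_prod_right' (κ := κς)
    have hb : ∀ t : ∀ j, T j, ‖Inner t‖ ≤ H₁ (t i) := by
      intro t
      have h0 := norm_integral_le_of_norm_le_const (μ := Measure.pi fun j => ς j (t j))
        (f := fun a => v (a, t i)) (C := H₁ (t i))
        (Filter.Eventually.of_forall fun a => by rw [Real.norm_eq_abs]; exact hdom₁ _ _)
      rw [hInner]
      simpa [measure_univ] using h0
    have hHi : Integrable (fun t : ∀ j, T j => H₁ (t i)) (Measure.pi lam) := by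
      have hmap := aux_map_eval_pi lam i
      exact (integrable_map_measure (by rw [hmap]; exact hH₁.aestronglyMeasurable)
        (measurable_pi_apply i).aemeasurable).mp (by rw [hmap]; exact hH₁)
    have hInnerInt : Integrable Inner (Measure.pi lam) :=
      Integrable.mono' hHi smInner.aestronglyMeasurable (Filter.Eventually.of_forall hb)
    have hmpT := measurePreserving_piFinSuccAbove lam j₀
    have step1 : ∫ t, Inner t ∂(Measure.pi lam)
        = ∫ q, Inner (eT.symm q) ∂((lam j₀).prod (Measure.pi lam')) := by
      rw [← hmpT.map_eq, integral_map_equiv]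
      refine integral_congr_ae (Filter.Eventually.of_forall fun x => ?_)
      exact congrArg Inner (eT.symm_apply_apply x).symm
    have hIntq : Integrable (fun q => Inner (eT.symm q))
        ((lam j₀).prod (Measure.pi lam')) := by
      rw [← hmpT.map_eq, integrable_map_equiv]
      refine hInnerInt.congr (Filter.Eventually.of_forall fun x => ?_)
      exact congrArg Inner (eT.symm_apply_apply x).symm
    have step2 : ∫ q, Inner (eT.symm q) ∂((lam j₀).prod (Measure.pi lam'))
        = ∫ t', ∫ t₀, Inner (eT.symm (t₀, t')) ∂(lam j₀) ∂(Measure.pi lam') :=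
      integral_prod_symm _ hIntq
    have step3 : ∀ (t₀ : T j₀) (t' : ∀ k, T (j₀.succAbove k)),
        Inner (eT.symm (t₀, t')) = ∫ b, Wfull t' (t₀, b) ∂(τ t₀) := by
      intro t₀ t'
      haveI : ∀ j, IsProbabilityMeasure (ς j ((eT.symm (t₀, t')) j)) := fun j => hςp _ _
      have hmpA := measurePreserving_piFinSuccAbove (fun j => ς j ((eT.symm (t₀, t')) j)) j₀
      have hInner0 : Inner (eT.symm (t₀, t'))
          = ∫ q, v (eA.symm q, eT.symm (t₀, t') i)
              ∂((ς j₀ ((eT.symm (t₀, t')) j₀)).prod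
                (Measure.pi fun k => ς (j₀.succAbove k) ((eT.symm (t₀, t')) (j₀.succAbove k)))) := by
        rw [hInner, ← hmpA.map_eq, integral_map_equiv]
        refine integral_congr_ae (Filter.Eventually.of_forall fun x => ?_)
        exact congrArg (fun a => v (a, eT.symm (t₀, t') i)) (eA.symm_apply_apply x).symm
      have e1 : ς j₀ ((eT.symm (t₀, t')) j₀) = τ t₀ := by
        rw [heTsymm, Fin.insertNth_apply_same, hς, Function.update_self]
      have e2 : (fun k => ς (j₀.succAbove k) ((eT.symm (t₀, t')) (j₀.succAbove k)))
          = fun k => σ' k (t' k) := by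
        funext k
        rw [heTsymm, Fin.insertNth_apply_succAbove, hς,
          Function.update_of_ne (Fin.succAbove_ne j₀ k), hσ']
      rw [hInner0, e1, e2]
      rw [integral_prod]
      · rw [hWfull]
        simp only [heTsymm]
      · haveI := hτp t₀
        apply Integrable.mono' (integrable_const (H₁ (eT.symm (t₀, t') i)))
        · exact (hvm'.comp
            ((eA.symm.measurable).prodMk measurable_const)).aestronglyMeasurable
        · exact Filter.Eventually.of_forall fun q => by
            rw [Real.norm_eq_abs]; exact hdom₁ _ _
    have step4 : ∀ t' : ∀ k, T (j₀.succAbove k),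
        ∫ t₀, ∫ b, Wfull t' (t₀, b) ∂(τ t₀) ∂(lam j₀)
          = ∫ p, Wfull t' p ∂((lam j₀) ⊗ₘ κτ) := by
      intro t'
      have smW : StronglyMeasurable (Wfull t') := by
        have hb1 : Measurable fun x : (T j₀ × A j₀) × (∀ k, A (j₀.succAbove k)) =>
            (eA.symm (x.1.2, x.2), j₀.insertNth x.1.1 t' i) := by
          refine Measurable.prodMk ?_ ?_
          · exact eA.symm.measurable.comp
              ((measurable_snd.comp measurable_fst).prodMk measurable_snd)
          · have hms : Measurable fun t₀ : T j₀ => j₀.insertNth t₀ t' i :=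
              (measurable_pi_apply i).comp
                (eT.symm.measurable.comp (measurable_id.prodMk measurable_const))
            exact hms.comp (measurable_fst.comp measurable_fst)
        rw [hWfull]
        exact ((hvm'.comp hb1).stronglyMeasurable).integral_prod_right'
      have hWint : Integrable (Wfull t') ((lam j₀) ⊗ₘ κτ) := by
        rw [Measure.integrable_compProd_iff smW.aestronglyMeasurable]
        constructor
        · refine Filter.Eventually.of_forall fun t₀ => ?_
          haveI := hτp t₀
          exact Integrable.mono' (μ := κτ t₀)
            (integrable_const (H₁ (j₀.insertNth t₀ t' i)))
            (smW.comp_measurable measurable_prodMk_left).aestronglyMeasurable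
            (Filter.Eventually.of_forall fun b => hWb t' (t₀, b))
        · refine Integrable.mono' (hHslot t') ?_ (Filter.Eventually.of_forall fun t₀ => ?_)
          · exact (smW.norm.integral_kernel_prod_right' (κ := κτ)).aestronglyMeasurable
          · haveI := hτp t₀
            have h2 := norm_integral_le_of_norm_le_const (μ := κτ t₀)
              (f := fun b => ‖Wfull t' (t₀, b)‖)
              (C := H₁ (j₀.insertNth t₀ t' i))
              (Filter.Eventually.of_forall fun b => by
                rw [norm_norm]; exact hWb t' (t₀, b))
            simpa [measure_univ] using h2
      exact (Measure.integral_compProd hWint).symm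
    calc ∫ t, Inner t ∂(Measure.pi lam)
        = ∫ q, Inner (eT.symm q) ∂((lam j₀).prod (Measure.pi lam')) := step1
      _ = ∫ t', ∫ t₀, Inner (eT.symm (t₀, t')) ∂(lam j₀) ∂(Measure.pi lam') := step2
      _ = ∫ t', (∫ p, Wfull t' p ∂((lam j₀) ⊗ₘ κτ)) ∂(Measure.pi lam') := by
          refine integral_congr_ae (Filter.Eventually.of_forall fun t' => ?_)
          show ∫ t₀, Inner (eT.symm (t₀, t')) ∂(lam j₀)
              = ∫ p, Wfull t' p ∂((lam j₀) ⊗ₘ κτ)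
          rw [← step4 t']
          exact integral_congr_ae (Filter.Eventually.of_forall fun t₀ => step3 t₀ t')
  -- the trim σ-algebra
  have hle : MeasurableSpace.prod G0 (mA j₀)
      ≤ (Prod.instMeasurableSpace : MeasurableSpace (T j₀ × A j₀)) :=
    sup_le_sup (MeasurableSpace.comap_mono hG0) le_rfl
  -- key equality of integrals against the two composition measures
  have key : ∀ (κ₁ κ₂ : @Kernel (T j₀) (A j₀) (mT j₀) (mA j₀)),
      IsMarkovKernel κ₁ → IsMarkovKernel κ₂ →
      (∀ E : Set (T j₀), MeasurableSet[G0] E → ∀ B : Set (A j₀), MeasurableSet B →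
        ∫⁻ t in E, κ₁ t B ∂(lam j₀) = ∫⁻ t in E, κ₂ t B ∂(lam j₀)) →
      ∀ t' : ∀ k, T (j₀.succAbove k),
        ∫ p, Wfull t' p ∂((lam j₀) ⊗ₘ κ₁) = ∫ p, Wfull t' p ∂((lam j₀) ⊗ₘ κ₂) := by
    intro κ₁ κ₂ hκ₁ hκ₂ hEB t'
    have smG : StronglyMeasurable[MeasurableSpace.prod G0 (mA j₀)] (Wfull t') := by
      letI : MeasurableSpace (T j₀ × A j₀) := MeasurableSpace.prod G0 (mA j₀)
      have hb1 : @Measurable ((T j₀ × A j₀) × (∀ k, A (j₀.succAbove k))) ((∀ j, A j) × T i)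
          _ ((MeasurableSpace.pi (m := mA)).prod Fi)
          (fun x => (eA.symm (x.1.2, x.2), j₀.insertNth x.1.1 t' i)) := by
        refine Measurable.prodMk ?_ ?_
        · exact eA.symm.measurable.comp
            ((measurable_snd.comp measurable_fst).prodMk measurable_snd)
        · exact (hslot t').comp (measurable_fst.comp measurable_fst)
      simp only [hWfull]
      exact (hvm.comp hb1).stronglyMeasurable.integral_prod_right'
    haveI : IsFiniteMeasure ((lam j₀) ⊗ₘ κ₁) := inferInstance
    haveI : IsFiniteMeasure ((lam j₀) ⊗ₘ κ₂) := inferInstance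
    have htrim : ((lam j₀) ⊗ₘ κ₁).trim hle = ((lam j₀) ⊗ₘ κ₂).trim hle := by
      refine ext_of_generate_finite
        (image2 (· ×ˢ ·) {s : Set (T j₀) | MeasurableSet[G0] s}
          {t : Set (A j₀) | MeasurableSet t})
        (@generateFrom_prod (T j₀) (A j₀) G0 (mA j₀)).symm
        (@isPiSystem_prod (T j₀) (A j₀) G0 (mA j₀)) ?_ ?_
      · rintro _ ⟨E, hE, B, hB, rfl⟩
        have hEBm : MeasurableSet[MeasurableSpace.prod G0 (mA j₀)] (E ×ˢ B) :=
          @MeasurableSet.prod _ _ G0 (mA j₀) _ _ hE hB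
        rw [trim_measurableSet_eq hle hEBm, trim_measurableSet_eq hle hEBm,
          Measure.compProd_apply_prod (hG0 _ hE) hB,
          Measure.compProd_apply_prod (hG0 _ hE) hB]
        exact hEB E hE B hB
      · rw [trim_measurableSet_eq hle MeasurableSet.univ,
          trim_measurableSet_eq hle MeasurableSet.univ]
        simp
    calc ∫ p, Wfull t' p ∂((lam j₀) ⊗ₘ κ₁)
        = ∫ p, Wfull t' p ∂(((lam j₀) ⊗ₘ κ₁).trim hle) := integral_trim hle smG
      _ = ∫ p, Wfull t' p ∂(((lam j₀) ⊗ₘ κ₂).trim hle) := by rw [htrim]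
      _ = ∫ p, Wfull t' p ∂((lam j₀) ⊗ₘ κ₂) := (integral_trim hle smG).symm
  rw [rep τ₁ hτ₁p hτ₁m, rep τ₂ hτ₂p hτ₂m]
  refine integral_congr_ae (Filter.Eventually.of_forall fun t' => ?_)
  exact key _ _ ⟨fun t => hτ₁p t⟩ ⟨fun t => hτ₂p t⟩ (fun E hE B hB => hJ E hE B hB) t'

end SCL

theorem stmt16 {n : ℕ}
    (A : Fin n → Type*) [∀ j, MetricSpace (A j)] [∀ j, CompactSpace (A j)]
    [mA : ∀ j, MeasurableSpace (A j)] [∀ j, BorelSpace (A j)]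
    (T : Fin n → Type*) [mT : ∀ j, MeasurableSpace (T j)]
    (lam : ∀ j, Measure (T j)) [∀ j, IsProbabilityMeasure (lam j)]
    -- countably generated sub-σ-algebras 𝓕ᵢ ⊆ 𝓣ᵢ:
    (F : ∀ j, MeasurableSpace (T j)) (hFsub : ∀ j, F j ≤ mT j)
    (hFcg : ∀ j, @MeasurableSpace.CountablyGenerated (T j) (F j))
    -- each 𝓣ᵢ is atomless:
    (hatomless : ∀ j, ∀ D : Set (T j), MeasurableSet[mT j] D → 0 < lam j D →
      ∃ E ⊆ D, MeasurableSet[mT j] E ∧ 0 < lam j E ∧ lam j E < lam j D)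
    -- each 𝓣ᵢ is nowhere equivalent to 𝓕ᵢ:
    (hne : ∀ j, ∀ D : Set (T j), MeasurableSet[mT j] D → 0 < lam j D →
      ∃ D₀ ⊆ D, MeasurableSet[mT j] D₀ ∧
        ∀ D' : Set (T j), MeasurableSet[F j] D' → 0 < lam j (symmDiff D₀ (D ∩ D')))
    -- payoff functions, 𝓑(A) ⊗ 𝓕ᵢ-measurable, continuous in actions, dominated:
    (u : ∀ i, (∀ j, A j) × T i → ℝ)
    (hum : ∀ i, Measurable[(MeasurableSpace.pi (m := mA)).prod (F i)] (u i))
    (huc : ∀ i, ∀ t : T i, Continuous fun a : ∀ j, A j => u i (a, t))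
    (h : ∀ i, T i → ℝ) (hint : ∀ i, Integrable (h i) (lam i))
    (hdom : ∀ i, ∀ (a : ∀ j, A j) (t : T i), |u i (a, t)| ≤ h i t)
    -- the expected payoff of a mixed strategy profile:
    (U : (i : Fin n) → (∀ j, T j → Measure (A j)) → ℝ)
    (hU : ∀ i σ, U i σ = ∫ t : ∀ j, T j,
      (∫ a, u i (a, t i) ∂(Measure.pi fun j => σ j (t j))) ∂(@Measure.pi (Fin n) T _ mT lam))
    -- g is an 𝓕-measurable mixed strategy profile:
    (g : ∀ j, T j → Measure (A j))
    (hgp : ∀ j t, IsProbabilityMeasure (g j t))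
    (hgm : ∀ j, ∀ B : Set (A j), MeasurableSet B → Measurable[F j] fun t => g j t B)
    -- g is a mixed strategy equilibrium:
    (hgeq : ∀ i, ∀ gi' : T i → Measure (A i), (∀ t, IsProbabilityMeasure (gi' t)) →
      (∀ B : Set (A i), MeasurableSet B → Measurable[mT i] fun t => gi' t B) →
      U i (Function.update g i gi') ≤ U i g)
    -- f is a pure strategy profile:
    (f : ∀ j, T j → A j) (hfm : ∀ j, Measurable[mT j, mA j] (f j))
    -- f is universally distribution equivalent to g:
    (hude : ∀ i, ∀ E : Set (T i), MeasurableSet[F i] E → ∀ B : Set (A i), MeasurableSet B →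
      lam i (E ∩ f i ⁻¹' B) = ∫⁻ t in E, g i t B ∂(lam i)) :
    -- then f is a pure strategy equilibrium:
    ∀ i, ∀ fi' : T i → A i, Measurable[mT i, mA i] fi' →
      U i (Function.update (fun j t => Measure.dirac (f j t)) i (fun t => Measure.dirac (fi' t)))
        ≤ U i (fun j t => Measure.dirac (f j t)) := by
  intro i fi' hfi'm
  obtain ⟨m, rfl⟩ : ∃ m, n = m + 1 := ⟨n - 1, (Nat.succ_pred_eq_of_pos i.pos).symm⟩
  classical
  set δ : ∀ j, T j → Measure (A j) := fun j t => Measure.dirac (f j t) with hδ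
  rw [hU, hU]
  have hδp : ∀ j t, IsProbabilityMeasure (δ j t) := fun j t => by
    rw [hδ]; infer_instance
  have hδm : ∀ j (B : Set (A j)), MeasurableSet B → Measurable[mT j] fun t => δ j t B := by
    intro j B hB
    simp only [hδ, Measure.dirac_apply' _ hB]
    exact (measurable_one.indicator hB).comp (hfm j)
  have hgm' : ∀ j (B : Set (A j)), MeasurableSet B → Measurable[mT j] fun t => g j t B :=
    fun j B hB => (hgm j B hB).mono (hFsub j) le_rfl
  have hJ : ∀ j₀ : Fin (m+1), ∀ E : Set (T j₀), MeasurableSet[F j₀] E →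
      ∀ B : Set (A j₀), MeasurableSet B →
      ∫⁻ t in E, g j₀ t B ∂(lam j₀) = ∫⁻ t in E, δ j₀ t B ∂(lam j₀) := by
    intro j₀ E hE B hB
    rw [← hude j₀ E hE B hB]
    simp only [hδ, Measure.dirac_apply' _ hB]
    have hind : ∀ t : T j₀, B.indicator (fun _ => (1:ENNReal)) (f j₀ t)
        = (f j₀ ⁻¹' B).indicator (fun _ => (1:ENNReal)) t := by
      intro t
      by_cases hmem : f j₀ t ∈ B
      · simp [Set.indicator_apply, hmem]
      · simp [Set.indicator_apply, hmem]
    calc lam j₀ (E ∩ f j₀ ⁻¹' B)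
        = (lam j₀).restrict E (f j₀ ⁻¹' B) := by
          rw [Measure.restrict_apply (hfm j₀ hB), Set.inter_comm]
      _ = ∫⁻ t, (f j₀ ⁻¹' B).indicator (fun _ => (1:ENNReal)) t ∂((lam j₀).restrict E) := by
          rw [lintegral_indicator (hfm j₀ hB)]
          simp
      _ = ∫⁻ t in E, B.indicator (fun _ => (1:ENNReal)) (f j₀ t) ∂(lam j₀) := by
          refine lintegral_congr fun t => ?_
          rw [hind t]
  have scl : ∀ (σ : ∀ j, T j → Measure (A j)), (∀ j t, IsProbabilityMeasure (σ j t)) →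
      (∀ j (B : Set (A j)), MeasurableSet B → Measurable[mT j] fun t => σ j t B) →
      ∀ j₀ : Fin (m+1),
      ∫ t, (∫ a, u i (a, t i) ∂(Measure.pi fun j => Function.update σ j₀ (g j₀) j (t j)))
          ∂(@Measure.pi (Fin (m+1)) T _ mT lam)
        = ∫ t, (∫ a, u i (a, t i) ∂(Measure.pi fun j => Function.update σ j₀ (δ j₀) j (t j)))
          ∂(@Measure.pi (Fin (m+1)) T _ mT lam) := by
    intro σ hσp hσm j₀
    refine @aux_scl m A T i j₀ (F i) (F j₀) mA mT lam inferInstance (hFsub i) (hFsub j₀)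
      (u i) (hum i) (h i) (hint i) (hdom i) σ hσp hσm ?_ ?_ (g j₀) (δ j₀) (hgp j₀) (hδp j₀)
      (hgm' j₀) (hδm j₀) (hJ j₀)
    · intro t'
      rcases eq_or_ne i j₀ with rfl | hne
      · simp only [Fin.insertNth_apply_same]
        exact measurable_id
      · obtain ⟨k, hk⟩ := Fin.exists_succAbove_eq hne
        subst hk
        simp only [Fin.insertNth_apply_succAbove]
        exact measurable_const
    · intro t'
      rcases eq_or_ne i j₀ with rfl | hne
      · simp only [Fin.insertNth_apply_same]
        exact (hint i).abs
      · obtain ⟨k, hk⟩ := Fin.exists_succAbove_eq hne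
        subst hk
        simp only [Fin.insertNth_apply_succAbove]
        exact integrable_const _
  set P : Finset (Fin (m+1)) → ∀ j, T j → Measure (A j) :=
    fun S j => if j ∈ S then g j else δ j with hP
  have hPp : ∀ S j t, IsProbabilityMeasure (P S j t) := by
    intro S j t; rw [hP]; dsimp only; split_ifs
    · exact hgp j t
    · exact hδp j t
  have hPm : ∀ S j (B : Set (A j)), MeasurableSet B →
      Measurable[mT j] fun t => P S j t B := by
    intro S j B hB; rw [hP]; dsimp only; split_ifs
    · exact hgm' j B hB
    · exact hδm j B hB
  have claim1 : ∀ (τ : T i → Measure (A i)), (∀ t, IsProbabilityMeasure (τ t)) →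
      (∀ B : Set (A i), MeasurableSet B → Measurable[mT i] fun t => τ t B) →
      ∀ S : Finset (Fin (m+1)),
      ∫ t, (∫ a, u i (a, t i) ∂(Measure.pi fun j => Function.update (P S) i τ j (t j)))
          ∂(@Measure.pi (Fin (m+1)) T _ mT lam)
        = ∫ t, (∫ a, u i (a, t i) ∂(Measure.pi fun j => Function.update δ i τ j (t j)))
          ∂(@Measure.pi (Fin (m+1)) T _ mT lam) := by
    intro τ hτp hτm S
    induction S using Finset.induction_on with
    | empty =>
      have hPe : P ∅ = δ := by
        funext j t; rw [hP]; simp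
      rw [hPe]
    | @insert j₀ S hj₀ ih =>
      have hupp : ∀ j t, IsProbabilityMeasure (Function.update (P S) i τ j t) := by
        intro j t
        rcases eq_or_ne j i with rfl | hj
        · rw [Function.update_self]; exact hτp t
        · rw [Function.update_of_ne hj]; exact hPp S j t
      have hupm : ∀ j (B : Set (A j)), MeasurableSet B →
          Measurable[mT j] fun t => Function.update (P S) i τ j t B := by
        intro j B hB
        rcases eq_or_ne j i with rfl | hj
        · rw [Function.update_self]; exact hτm B hB
        · rw [Function.update_of_ne hj]; exact hPm S j B hB
      rcases eq_or_ne j₀ i with rfl | hne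
      · have he : Function.update (P (insert j₀ S)) j₀ τ = Function.update (P S) j₀ τ := by
          funext j
          rcases eq_or_ne j j₀ with rfl | hj
          · rw [Function.update_self, Function.update_self]
          · rw [Function.update_of_ne hj, Function.update_of_ne hj, hP]
            dsimp only
            simp [Finset.mem_insert, hj]
        rw [he]; exact ih
      · have e1 : Function.update (P (insert j₀ S)) i τ
            = Function.update (Function.update (P S) i τ) j₀ (g j₀) := by
          funext j
          rcases eq_or_ne j j₀ with rfl | hj
          · rw [Function.update_of_ne hne, Function.update_self, hP]
            dsimp only
            simp
          · rw [Function.update_of_ne hj]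
            rcases eq_or_ne j i with rfl | hji
            · rw [Function.update_self, Function.update_self]
            · rw [Function.update_of_ne hji, Function.update_of_ne hji, hP]
              dsimp only
              simp [Finset.mem_insert, hj]
        have e2 : Function.update (Function.update (P S) i τ) j₀ (δ j₀)
            = Function.update (P S) i τ := by
          funext j
          rcases eq_or_ne j j₀ with rfl | hj
          · rw [Function.update_self, Function.update_of_ne hne, hP]
            dsimp only
            simp [hj₀]
          · rw [Function.update_of_ne hj]
        rw [e1, scl (Function.update (P S) i τ) hupp hupm j₀, e2]
        exact ih
  -- assemble
  have hdiracp : ∀ t : T i, IsProbabilityMeasure (Measure.dirac (fi' t) : Measure (A i)) :=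
    fun t => inferInstance
  have hdiracm : ∀ B : Set (A i), MeasurableSet B →
      Measurable[mT i] fun t => (Measure.dirac (fi' t) : Measure (A i)) B := by
    intro B hB
    simp only [Measure.dirac_apply' _ hB]
    exact (measurable_one.indicator hB).comp hfi'm
  have hA := claim1 (fun t => Measure.dirac (fi' t)) hdiracp hdiracm Finset.univ
  have hPuniv : Function.update (P Finset.univ) i (fun t => Measure.dirac (fi' t))
      = Function.update g i (fun t => Measure.dirac (fi' t)) := by
    funext j
    rcases eq_or_ne j i with rfl | hj
    · rw [Function.update_self, Function.update_self]
    · rw [Function.update_of_ne hj, Function.update_of_ne hj, hP]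
      dsimp only
      simp
  have hB := hgeq i (fun t => Measure.dirac (fi' t)) hdiracp hdiracm
  rw [hU, hU] at hB
  have hC := claim1 (g i) (hgp i) (hgm' i) Finset.univ
  have hguniv : Function.update (P Finset.univ) i (g i) = g := by
    funext j
    rcases eq_or_ne j i with rfl | hj
    · rw [Function.update_self]
    · rw [Function.update_of_ne hj, hP]
      dsimp only
      simp
  have hscl_i := scl δ hδp hδm i
  have hδi : Function.update δ i (δ i) = δ := Function.update_eq_self i δ
  rw [hδi] at hscl_i
  rw [hguniv] at hC
  calc ∫ t, (∫ a, u i (a, t i)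
        ∂(Measure.pi fun j => Function.update δ i (fun t => Measure.dirac (fi' t)) j (t j)))
        ∂(@Measure.pi (Fin (m+1)) T _ mT lam)
      = ∫ t, (∫ a, u i (a, t i)
          ∂(Measure.pi fun j =>
            Function.update (P Finset.univ) i (fun t => Measure.dirac (fi' t)) j (t j)))
          ∂(@Measure.pi (Fin (m+1)) T _ mT lam) := hA.symm
    _ = ∫ t, (∫ a, u i (a, t i)
          ∂(Measure.pi fun j => Function.update g i (fun t => Measure.dirac (fi' t)) j (t j)))
          ∂(@Measure.pi (Fin (m+1)) T _ mT lam) := by rw [hPuniv]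
    _ ≤ ∫ t, (∫ a, u i (a, t i) ∂(Measure.pi fun j => g j (t j)))
          ∂(@Measure.pi (Fin (m+1)) T _ mT lam) := hB
    _ = ∫ t, (∫ a, u i (a, t i)
          ∂(Measure.pi fun j => Function.update δ i (g i) j (t j)))
          ∂(@Measure.pi (Fin (m+1)) T _ mT lam) := hC
    _ = ∫ t, (∫ a, u i (a, t i) ∂(Measure.pi fun j => δ j (t j)))
          ∂(@Measure.pi (Fin (m+1)) T _ mT lam) := hscl_i
end
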